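/- Let A be a type, B a finite type, E : A → B → Prop a relation (a bipartite graph), and d₂ a natural number. Suppose the bipartite graph is K_{d₂, 2^{d₂}}-free, and let c : B → (A → Bool) be any family of concepts such that for all a, b, c b a = true implies E a b. Then the concept class {c b : b ∈ B} is K_{d₂, 2^{d₂}}-free, and consequently there exists an online learner 𝔸 : List (A × Bool) → A → Bool that makes strictly fewer than 2·d₂ mistakes on every sequence of labeled examples with pairwise distinct points that is realizable by {c b : b ∈ B}. -/

import Mathlib

/-- The concept class `𝒞` contains `K_{s,t}`: there are a finite set `S ⊆ X` of size `s`
and a subset `𝒯 ⊆ 𝒞` of size `t` with `c x = true` for all `x ∈ S`, `c ∈ 𝒯`. -/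
def ContainsK {X : Type*} (𝒞 : Finset (X → Bool)) (s t : ℕ) : Prop :=
  ∃ S : Finset X, S.card = s ∧ ∃ 𝒯 ⊆ 𝒞, 𝒯.card = t ∧ ∀ x ∈ S, ∀ c ∈ 𝒯, c x = true

/-- Number of mistakes of the online learner `𝔸` on a sequence of labeled examples,
given the history `hist` of previously seen examples. -/
def mistakesAux {X : Type*} (𝔸 : List (X × Bool) → X → Bool)
    (hist : List (X × Bool)) : List (X × Bool) → ℕ
  | [] => 0
  | (x, y) :: rest =>
      (if 𝔸 hist x ≠ y then 1 else 0) + mistakesAux 𝔸 (hist ++ [(x, y)]) rest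

/-- Number of mistakes of the online learner `𝔸` on a sequence of labeled examples. -/
def mistakes {X : Type*} (𝔸 : List (X × Bool) → X → Bool) (L : List (X × Bool)) : ℕ :=
  mistakesAux 𝔸 [] L

section Aux

variable {A : Type*}

/-- Version space: concepts consistent with the history. -/
def Vspace (𝒞 : Finset (A → Bool)) (hist : List (A × Bool)) : Finset (A → Bool) :=
  𝒞.filter (fun f => ∀ p ∈ hist, f p.1 = p.2)

/-- The learner: conservative while the version space is big, halving once it is small. -/
def learner (𝒞 : Finset (A → Bool)) (d : ℕ) (hist : List (A × Bool)) (x : A) : Bool :=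
  if 2 ^ d ≤ (Vspace 𝒞 hist).card then
    decide (∀ f ∈ Vspace 𝒞 hist, f x = true)
  else
    decide ((Vspace 𝒞 hist).card <
      2 * ((Vspace 𝒞 hist).filter (fun f => f x = true)).card)

open Classical in
/-- Points labeled `true` in the history. -/
noncomputable def Tset (hist : List (A × Bool)) : Finset A :=
  ((hist.filter (fun p => p.2 = true)).map Prod.fst).toFinset

lemma mem_Vspace {𝒞 : Finset (A → Bool)} {f : A → Bool} {hist : List (A × Bool)} :
    f ∈ Vspace 𝒞 hist ↔ f ∈ 𝒞 ∧ ∀ p ∈ hist, f p.1 = p.2 := Finset.mem_filter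

lemma Vspace_append (𝒞 : Finset (A → Bool)) (hist : List (A × Bool)) (x : A) (y : Bool) :
    Vspace 𝒞 (hist ++ [(x, y)]) = (Vspace 𝒞 hist).filter (fun f => f x = y) := by
  ext f
  simp only [Vspace, Finset.mem_filter, List.mem_append, List.mem_singleton]
  constructor
  · intro ⟨h𝒞, h⟩
    exact ⟨⟨h𝒞, fun p hp => h p (Or.inl hp)⟩, h (x, y) (Or.inr rfl)⟩
  · rintro ⟨⟨h𝒞, h⟩, hx⟩
    refine ⟨h𝒞, fun p hp => ?_⟩
    rcases hp with hp | rfl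
    · exact h p hp
    · exact hx

lemma mem_Tset {hist : List (A × Bool)} {a : A} : a ∈ Tset hist ↔ (a, true) ∈ hist := by
  classical
  simp only [Tset, List.mem_toFinset, List.mem_map, List.mem_filter]
  constructor
  · rintro ⟨⟨u, v⟩, ⟨hm, hv⟩, rfl⟩
    simp only [decide_eq_true_eq] at hv
    simpa [hv] using hm
  · intro h
    exact ⟨(a, true), ⟨h, by simp⟩, rfl⟩

lemma forced {𝒞 : Finset (A → Bool)} {hist : List (A × Bool)} {g : A → Bool}
    (hg : g ∈ Vspace 𝒞 hist) : ∀ a ∈ Tset hist, g a = true := by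
  intro a ha
  exact (mem_Vspace.mp hg).2 (a, true) (mem_Tset.mp ha)

lemma Tcard_lt {𝒞 : Finset (A → Bool)} {d : ℕ} (hK : ¬ ContainsK 𝒞 d (2 ^ d))
    {hist : List (A × Bool)} (hW : 2 ^ d ≤ (Vspace 𝒞 hist).card) :
    (Tset hist).card < d := by
  by_contra h
  push_neg at h
  obtain ⟨S, hS, hScard⟩ := Finset.exists_subset_card_eq h
  obtain ⟨𝒯, h𝒯, h𝒯card⟩ := Finset.exists_subset_card_eq hW
  exact hK ⟨S, hScard, 𝒯, h𝒯.trans (Finset.filter_subset _ _), h𝒯card,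
    fun x hx g hg => forced (h𝒯 hg) x (hS hx)⟩

lemma main_bound (𝒞 : Finset (A → Bool)) (d : ℕ) (hK : ¬ ContainsK 𝒞 d (2 ^ d))
    (f : A → Bool) (hf : f ∈ 𝒞) (L' : List (A × Bool)) :
    ∀ hist : List (A × Bool), (∀ p ∈ hist, f p.1 = p.2) → (∀ p ∈ L', f p.1 = p.2) →
      (hist.map Prod.fst ++ L'.map Prod.fst).Nodup →
      mistakesAux (learner 𝒞 d) hist L' ≤
        (d - (Tset hist).card) + Nat.log 2 (min (Vspace 𝒞 hist).card (2 ^ d - 1)) := by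
  induction L' with
  | nil => intro hist _ _ _; simp [mistakesAux]
  | cons p rest ih =>
    obtain ⟨x, y⟩ := p
    intro hist h1 h2 h3
    have hfx : f x = y := h2 (x, y) (by simp)
    have hxh : x ∉ hist.map Prod.fst := by
      have hd := (List.nodup_append'.mp h3).2.2
      intro hx
      exact hd hx (by simp)
    have hfV : f ∈ Vspace 𝒞 hist := mem_Vspace.mpr ⟨hf, h1⟩
    have h1' : ∀ p ∈ hist ++ [(x, y)], f p.1 = p.2 := by
      intro p hp
      rcases List.mem_append.mp hp with h | h
      · exact h1 p h
      · simp only [List.mem_singleton] at h; subst h; exact hfx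
    have hfV' : f ∈ Vspace 𝒞 (hist ++ [(x, y)]) := mem_Vspace.mpr ⟨hf, h1'⟩
    have h2' : ∀ p ∈ rest, f p.1 = p.2 := fun p hp => h2 p (by simp [hp])
    have h3' : ((hist ++ [(x, y)]).map Prod.fst ++ rest.map Prod.fst).Nodup := by
      simpa [List.append_assoc] using h3
    have IH := ih (hist ++ [(x, y)]) h1' h2' h3'
    have hVsub : Vspace 𝒞 (hist ++ [(x, y)]) ⊆ Vspace 𝒞 hist := by
      rw [Vspace_append]; exact Finset.filter_subset _ _
    have hTsub : Tset hist ⊆ Tset (hist ++ [(x, y)]) := by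
      intro a ha
      exact mem_Tset.mpr (List.mem_append.mpr (Or.inl (mem_Tset.mp ha)))
    have hlogmono : Nat.log 2 (min (Vspace 𝒞 (hist ++ [(x, y)])).card (2 ^ d - 1)) ≤
        Nat.log 2 (min (Vspace 𝒞 hist).card (2 ^ d - 1)) :=
      Nat.log_mono_right (min_le_min (Finset.card_le_card hVsub) le_rfl)
    have hTmono : (d - (Tset (hist ++ [(x, y)])).card) ≤ d - (Tset hist).card :=
      Nat.sub_le_sub_left (Finset.card_le_card hTsub) d
    by_cases hmis : learner 𝒞 d hist x = y
    · have : mistakesAux (learner 𝒞 d) hist ((x, y) :: rest) =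
          mistakesAux (learner 𝒞 d) (hist ++ [(x, y)]) rest := by
        simp [mistakesAux, hmis]
      rw [this]
      exact le_trans IH (add_le_add hTmono hlogmono)
    · have hrw : mistakesAux (learner 𝒞 d) hist ((x, y) :: rest) =
          1 + mistakesAux (learner 𝒞 d) (hist ++ [(x, y)]) rest := by
        simp [mistakesAux, hmis]
      rw [hrw]
      by_cases hph : 2 ^ d ≤ (Vspace 𝒞 hist).card
      · -- conservative phase
        have hlearn : learner 𝒞 d hist x = decide (∀ g ∈ Vspace 𝒞 hist, g x = true) := by
          simp [learner, hph]
        cases y with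
        | false =>
          exfalso
          have htrue : learner 𝒞 d hist x = true := by
            cases h : learner 𝒞 d hist x
            · exact absurd h hmis
            · rfl
          rw [hlearn] at htrue
          have := of_decide_eq_true htrue f hfV
          rw [hfx] at this
          exact Bool.false_ne_true this
        | true =>
          have hTlt := Tcard_lt hK hph
          have hxT : x ∉ Tset hist := fun hx =>
            hxh (List.mem_map.mpr ⟨(x, true), mem_Tset.mp hx, rfl⟩)
          have hTcard' : (Tset (hist ++ [(x, true)])).card = (Tset hist).card + 1 := by
            classical
            have hins : Tset (hist ++ [(x, true)]) = insert x (Tset hist) := by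
              ext a
              simp only [mem_Tset, List.mem_append, List.mem_singleton, Finset.mem_insert,
                Prod.mk.injEq, and_true]
              tauto
            rw [hins, Finset.card_insert_of_notMem hxT]
          omega
      · -- halving phase
        push_neg at hph
        have hW1 : 1 ≤ (Vspace 𝒞 hist).card := Finset.card_pos.mpr ⟨f, hfV⟩
        have hV'1 : 1 ≤ (Vspace 𝒞 (hist ++ [(x, y)])).card := Finset.card_pos.mpr ⟨f, hfV'⟩
        have hlearn : learner 𝒞 d hist x = decide ((Vspace 𝒞 hist).card <
            2 * ((Vspace 𝒞 hist).filter (fun g => g x = true)).card) := by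
          simp [learner, not_le.mpr hph]
        have hsplit : ((Vspace 𝒞 hist).filter (fun g => g x = true)).card +
            ((Vspace 𝒞 hist).filter (fun g => ¬ (g x = true))).card =
            (Vspace 𝒞 hist).card := Finset.card_filter_add_card_filter_not _
        have hhalf : 2 * (Vspace 𝒞 (hist ++ [(x, y)])).card ≤ (Vspace 𝒞 hist).card := by
          cases y with
          | true =>
            have hfalse : learner 𝒞 d hist x = false := by
              cases h : learner 𝒞 d hist x
              · rfl
              · exact absurd h hmis
            rw [hlearn] at hfalse
            have hle : ¬ ((Vspace 𝒞 hist).card <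
                2 * ((Vspace 𝒞 hist).filter (fun g => g x = true)).card) :=
              of_decide_eq_false hfalse
            rw [Vspace_append]
            exact not_lt.mp hle
          | false =>
            have htrue : learner 𝒞 d hist x = true := by
              cases h : learner 𝒞 d hist x
              · exact absurd h hmis
              · rfl
            rw [hlearn] at htrue
            have hlt := of_decide_eq_true htrue
            rw [Vspace_append]
            have hpred : (Vspace 𝒞 hist).filter (fun g => g x = false) =
                (Vspace 𝒞 hist).filter (fun g => ¬ (g x = true)) := by
              apply Finset.filter_congr
              intro g _
              simp
            rw [hpred]
            generalize hc1 : ((Vspace 𝒞 hist).filter (fun g => g x = true)).card = c1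
              at hlt hsplit
            generalize hc0 : ((Vspace 𝒞 hist).filter (fun g => ¬ (g x = true))).card = c0
              at hsplit ⊢
            generalize hw : (Vspace 𝒞 hist).card = w at hlt hsplit ⊢
            clear * - hlt hsplit
            omega
        have hWle : (Vspace 𝒞 hist).card ≤ 2 ^ d - 1 := by clear * - hph; omega
        have hmin : min (Vspace 𝒞 hist).card (2 ^ d - 1) = (Vspace 𝒞 hist).card :=
          min_eq_left hWle
        have hmin' : min (Vspace 𝒞 (hist ++ [(x, y)])).card (2 ^ d - 1) =
            (Vspace 𝒞 (hist ++ [(x, y)])).card :=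
          min_eq_left (le_trans (Finset.card_le_card hVsub) hWle)
        have hlog : Nat.log 2 (Vspace 𝒞 (hist ++ [(x, y)])).card + 1 ≤
            Nat.log 2 (Vspace 𝒞 hist).card := by
          have heq : Nat.log 2 ((Vspace 𝒞 (hist ++ [(x, y)])).card * 2) =
              Nat.log 2 (Vspace 𝒞 (hist ++ [(x, y)])).card + 1 :=
            Nat.log_mul_base (by norm_num) (by clear * - hV'1; omega)
          rw [← heq]
          exact Nat.log_mono_right (by clear * - hhalf; omega)
        rw [hmin]
        rw [hmin'] at IH
        clear * - IH hlog hTmono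
        omega

end Aux

theorem soundness_reduction {A B : Type*} [Fintype B] [DecidableEq (A → Bool)]
    (E : A → B → Prop) (d₂ : ℕ)
    (hfree : ¬ ∃ (S : Finset A) (T : Finset B), S.card = d₂ ∧ T.card = 2 ^ d₂ ∧
        ∀ a ∈ S, ∀ b ∈ T, E a b)
    (c : B → (A → Bool)) (hc : ∀ (a : A) (b : B), c b a = true → E a b) :
    ¬ ContainsK (Finset.image c Finset.univ) d₂ (2 ^ d₂) ∧
      ∃ 𝔸 : List (A × Bool) → A → Bool,
        ∀ L : List (A × Bool),
          (L.map Prod.fst).Nodup →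
          (∃ f ∈ Finset.image c Finset.univ, ∀ p ∈ L, f p.1 = p.2) →
          mistakes 𝔸 L < 2 * d₂ := by
  classical
  have part1 : ¬ ContainsK (Finset.image c Finset.univ) d₂ (2 ^ d₂) := by
    rintro ⟨S, hS, 𝒯, h𝒯sub, h𝒯card, hall⟩
    apply hfree
    have hsub : 𝒯 ⊆ Finset.image c (Finset.univ.filter (fun b => c b ∈ 𝒯)) := by
      intro g hg
      obtain ⟨b, _, rfl⟩ := Finset.mem_image.mp (h𝒯sub hg)
      exact Finset.mem_image.mpr ⟨b, Finset.mem_filter.mpr ⟨Finset.mem_univ _, hg⟩, rfl⟩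
    have hcard : 2 ^ d₂ ≤ (Finset.univ.filter (fun b => c b ∈ 𝒯)).card := by
      calc 2 ^ d₂ = 𝒯.card := h𝒯card.symm
        _ ≤ (Finset.image c (Finset.univ.filter (fun b => c b ∈ 𝒯))).card :=
            Finset.card_le_card hsub
        _ ≤ _ := Finset.card_image_le
    obtain ⟨T, hTsub, hTcard⟩ := Finset.exists_subset_card_eq hcard
    exact ⟨S, T, hS, hTcard, fun a ha b hb =>
      hc a b (hall a ha (c b) ((Finset.mem_filter.mp (hTsub hb)).2))⟩
  refine ⟨part1, learner (Finset.image c Finset.univ) d₂, ?_⟩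
  rintro L hnd ⟨f, hf, hfL⟩
  have hd : 1 ≤ d₂ := by
    by_contra h
    have hz : d₂ = 0 := by omega
    subst hz
    exact part1 ⟨∅, rfl, {f}, by simpa using hf, by simp, by simp⟩
  have hmain := main_bound (Finset.image c Finset.univ) d₂ part1 f hf L []
    (by simp) hfL (by simpa using hnd)
  have hT0 : (Tset ([] : List (A × Bool))).card = 0 := by simp [Tset]
  have hlog : Nat.log 2 (min (Vspace (Finset.image c Finset.univ) []).card (2 ^ d₂ - 1))
      ≤ d₂ - 1 := by
    set m := min (Vspace (Finset.image c Finset.univ) []).card (2 ^ d₂ - 1) with hm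
    have hml : m < 2 ^ d₂ := by
      have h2 : 1 ≤ 2 ^ d₂ := Nat.one_le_two_pow
      have := min_le_right (Vspace (Finset.image c Finset.univ) []).card (2 ^ d₂ - 1)
      omega
    rcases Nat.eq_zero_or_pos m with h0 | hpos
    · simp [h0]
    · have := (Nat.log_lt_of_lt_pow (by omega : m ≠ 0) hml)
      omega
  unfold mistakes
  omega
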